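/- Let n ≥ 2, s > 0, and a > 1. Then for all i, k ∈ {1,…,n−1} with i ≠ k (so in particular n ≥ 3 for this part), ∫_{∂E_a} θ_i² θ_k² μ(dθ) = (1/3) J_2^{(1)}; and for every i ∈ {1,…,n−1}, a ∫_{∂E_a} θ_i² θ_n² μ(dθ) = J_1^{(1)} − ((n+1)/3) J_2^{(1)}. -/

import Mathlib

open MeasureTheory Finset Filter
open scoped BigOperators NNReal ENNReal FourierTransform

noncomputable section

/-- Finite difference of order `2m`:
`δ_m u(x,y) = ∑_{k=-m}^m (-1)^k binom(2m, m-k) u(x + k y)`. -/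
def finDiff (n m : ℕ) (u : EuclideanSpace ℝ (Fin n) → ℝ) (x y : EuclideanSpace ℝ (Fin n)) : ℝ :=
  ∑ k ∈ Finset.Icc (-(m : ℤ)) (m : ℤ),
    (-1 : ℝ) ^ k * (Nat.choose (2 * m) ((m : ℤ) - k).toNat : ℝ) * u (x + (k : ℝ) • y)

open Classical in
/-- The normalizing constant `c_{n,m,s}`. -/
def cnms (n m : ℕ) (s : ℝ) : ℝ :=
  if ∃ j : ℕ, s = (j : ℝ) then
    (4 : ℝ) ^ s * Real.Gamma ((n : ℝ) / 2 + s) * Real.Gamma (s + 1) /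
        (2 * Real.pi ^ ((n : ℝ) / 2)) *
      (∑ k ∈ Finset.Icc 2 m, (-1 : ℝ) ^ (k + 1 + ⌊s⌋₊) * (Nat.choose (2 * m) (m - k) : ℝ) *
          (k : ℝ) ^ (2 * s) * Real.log (k : ℝ))⁻¹
  else
    (4 : ℝ) ^ s * Real.Gamma ((n : ℝ) / 2 + s) /
        (Real.pi ^ ((n : ℝ) / 2) * Real.Gamma (-s)) *
      (∑ k ∈ Finset.Icc 1 m, (-1 : ℝ) ^ k * (Nat.choose (2 * m) (m - k) : ℝ) *
          (k : ℝ) ^ (2 * s))⁻¹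

/-- Pointwise hypersingular-integral realization `L_{m,s}` of the fractional
Laplacian `(-Δ)^s`. -/
def Lms (n m : ℕ) (s : ℝ) (u : EuclideanSpace ℝ (Fin n) → ℝ)
    (x : EuclideanSpace ℝ (Fin n)) : ℝ :=
  cnms n m s / 2 * ∫ y : EuclideanSpace ℝ (Fin n), finDiff n m u x y / ‖y‖ ^ ((n : ℝ) + 2 * s)

/-- `|x|_a² = ∑ aᵢ xᵢ²`. -/
def qa (n : ℕ) (a : Fin n → ℝ) (x : EuclideanSpace ℝ (Fin n)) : ℝ := ∑ i, a i * x i ^ 2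

/-- The open ellipsoid `E_a`. -/
def Ea (n : ℕ) (a : Fin n → ℝ) : Set (EuclideanSpace ℝ (Fin n)) := {x | qa n a x < 1}

/-- `u_β(x) = (1 - |x|_a²)₊^β`. -/
def uPow (n : ℕ) (a : Fin n → ℝ) (β : ℝ) (x : EuclideanSpace ℝ (Fin n)) : ℝ :=
  max 0 (1 - qa n a x) ^ β

/-- `⟨x, θ⟩_a = ∑ aᵢ xᵢ θᵢ`. -/
def aInner (n : ℕ) (a : Fin n → ℝ) (x θ : EuclideanSpace ℝ (Fin n)) : ℝ :=
  ∑ i, a i * x i * θ i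

/-- `Aθ` for `A = diag a`. -/
def Avec (n : ℕ) (a : Fin n → ℝ) (θ : EuclideanSpace ℝ (Fin n)) : EuclideanSpace ℝ (Fin n) :=
  (WithLp.equiv 2 (Fin n → ℝ)).symm fun i => a i * θ i

/-- `∫_{∂E_a} f dμ`, where `μ(dθ) = dθ / (|θ|^{n+2s} |Aθ|)` and `dθ` is the
`(n-1)`-dimensional Hausdorff (surface) measure on `∂E_a`. -/
def surfInt (n : ℕ) (s : ℝ) (a : Fin n → ℝ) (f : EuclideanSpace ℝ (Fin n) → ℝ) : ℝ :=
  ∫ θ in {θ : EuclideanSpace ℝ (Fin n) | qa n a θ = 1},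
    f θ / (‖θ‖ ^ ((n : ℝ) + 2 * s) * ‖Avec n a θ‖) ∂(μH[(n : ℝ) - 1])

/-- `k_{n,s} = 2^{2s-1} Γ(n/2+s) / π^{n/2}`. -/
def kns (n : ℕ) (s : ℝ) : ℝ :=
  (2 : ℝ) ^ (2 * s - 1) * Real.Gamma ((n : ℝ) / 2 + s) / Real.pi ^ ((n : ℝ) / 2)

/-- `J₀ = ∫_{∂E_a} μ(dθ)`. -/
def J0fun (n : ℕ) (s : ℝ) (a : Fin n → ℝ) : ℝ := surfInt n s a fun _ => 1

/-- `J_i^{(k)} = a_k^i ∫_{∂E_a} θ_k^{2i} μ(dθ)`. -/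
def Jik (n : ℕ) (s : ℝ) (a : Fin n → ℝ) (i : ℕ) (k : Fin n) : ℝ :=
  a k ^ i * surfInt n s a fun θ => θ k ^ (2 * i)

/-- Gauss hypergeometric function `₂F₁(α, β; γ; z)`. -/
def hyp2F1 (α β γ z : ℝ) : ℝ :=
  ∑' k : ℕ, (ascPochhammer ℝ k).eval α * (ascPochhammer ℝ k).eval β /
      ((ascPochhammer ℝ k).eval γ * (Nat.factorial k : ℝ)) * z ^ k

/-- The weight vector `(1, …, 1, a)`. -/
def avec (n : ℕ) (a : ℝ) : Fin n → ℝ := fun i => if (i : ℕ) = n - 1 then a else 1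

/-- Beta function `B(x,y) = Γ(x)Γ(y)/Γ(x+y)`. -/
def realBeta (x y : ℝ) : ℝ := Real.Gamma x * Real.Gamma y / Real.Gamma (x + y)

/-- Surface measure `ω_d = 2 π^{(d+1)/2} / Γ((d+1)/2)` of the unit `d`-sphere. -/
def sphVol (d : ℝ) : ℝ := 2 * Real.pi ^ ((d + 1) / 2) / Real.Gamma ((d + 1) / 2)

/-- Point inversion `σ(x) = c (x+ν)/|x+ν|² - ν`. -/
def ptInv (n : ℕ) (c : ℝ) (ν x : EuclideanSpace ℝ (Fin n)) : EuclideanSpace ℝ (Fin n) :=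
  (c / ‖x + ν‖ ^ 2) • (x + ν) - ν

/-- `Ω(a,c,ν) = σ(E_a)` (the set of `x ≠ -ν` with `σ(x) ∈ E_a`). -/
def Omg (n : ℕ) (c : ℝ) (ν : EuclideanSpace ℝ (Fin n)) (a : Fin n → ℝ) :
    Set (EuclideanSpace ℝ (Fin n)) :=
  {x | x ≠ -ν ∧ qa n a (ptInv n c ν x) < 1}

open Classical in
/-- The transformed torsion function `w_s(x) = |x+ν|^{2s-n} u_s(σ(x))`, extended by `0` at `-ν`. -/
def ws (n : ℕ) (s c : ℝ) (ν : EuclideanSpace ℝ (Fin n)) (a : Fin n → ℝ)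
    (x : EuclideanSpace ℝ (Fin n)) : ℝ :=
  if x = -ν then 0 else ‖x + ν‖ ^ (2 * s - (n : ℝ)) * uPow n a s (ptInv n c ν x)

/-- `(Ax)·y` for a general matrix `A`. -/
def qA (n : ℕ) (A : Matrix (Fin n) (Fin n) ℝ) (x y : EuclideanSpace ℝ (Fin n)) : ℝ :=
  ∑ i, ∑ j, A i j * x j * y i


namespace S19

lemma norm_eq' {n : ℕ} (x : EuclideanSpace ℝ (Fin n)) :
    ‖x‖ = Real.sqrt (∑ i, x i ^ 2) := by
  rw [EuclideanSpace.norm_eq]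
  congr 1
  refine Finset.sum_congr rfl fun i _ => ?_
  rw [Real.norm_eq_abs, sq_abs]

lemma dist_eq' {n : ℕ} (x y : EuclideanSpace ℝ (Fin n)) :
    dist x y = Real.sqrt (∑ i, (x i - y i) ^ 2) := by
  rw [EuclideanSpace.dist_eq]
  congr 1
  refine Finset.sum_congr rfl fun i _ => ?_
  rw [Real.dist_eq, sq_abs]

lemma abs_coord_le {n : ℕ} (x : EuclideanSpace ℝ (Fin n)) (i : Fin n) :
    |x i| ≤ ‖x‖ := by
  rw [norm_eq', ← Real.sqrt_sq_eq_abs]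
  exact Real.sqrt_le_sqrt (Finset.single_le_sum (f := fun j => x j ^ 2)
    (fun j _ => sq_nonneg _) (Finset.mem_univ i))

lemma continuous_qa (n : ℕ) (b : Fin n → ℝ) : Continuous (qa n b) := by
  refine continuous_finset_sum _ fun i _ => ?_
  exact (continuous_const.mul (((EuclideanSpace.proj (𝕜 := ℝ) i).continuous).pow 2))

lemma measurableSet_S (n : ℕ) (b : Fin n → ℝ) :
    MeasurableSet {θ : EuclideanSpace ℝ (Fin n) | qa n b θ = 1} :=
  (isClosed_eq (continuous_qa n b) continuous_const).measurableSet

lemma norm_le_one {n : ℕ} {b : Fin n → ℝ} (hb1 : ∀ i, 1 ≤ b i)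
    {θ : EuclideanSpace ℝ (Fin n)} (hθ : qa n b θ = 1) : ‖θ‖ ≤ 1 := by
  rw [norm_eq']
  rw [show (1:ℝ) = Real.sqrt 1 by simp]
  refine Real.sqrt_le_sqrt ?_
  calc ∑ i, θ i ^ 2 ≤ ∑ i, b i * θ i ^ 2 := by
        refine Finset.sum_le_sum fun i _ => ?_
        nlinarith [hb1 i, sq_nonneg (θ i)]
    _ = 1 := hθ

lemma sq_coord_le_one {n : ℕ} {b : Fin n → ℝ} (hb1 : ∀ i, 1 ≤ b i)
    {θ : EuclideanSpace ℝ (Fin n)} (hθ : qa n b θ = 1) (i : Fin n) : θ i ^ 2 ≤ 1 := by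
  have h1 := abs_coord_le θ i
  have h2 := norm_le_one hb1 hθ
  have := abs_nonneg (θ i)
  nlinarith [sq_abs (θ i)]

lemma one_div_sqrt_le_norm {n : ℕ} {b : Fin n → ℝ} {a : ℝ} (ha : 0 < a)
    (hba : ∀ i, b i ≤ a) {θ : EuclideanSpace ℝ (Fin n)} (hθ : qa n b θ = 1) :
    Real.sqrt a⁻¹ ≤ ‖θ‖ := by
  rw [norm_eq']
  refine Real.sqrt_le_sqrt ?_
  have h : (1:ℝ) ≤ a * ∑ i, θ i ^ 2 := by
    calc (1:ℝ) = ∑ i, b i * θ i ^ 2 := hθ.symm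
      _ ≤ ∑ i, a * θ i ^ 2 := by
          refine Finset.sum_le_sum fun i _ => ?_
          nlinarith [hba i, sq_nonneg (θ i)]
      _ = a * ∑ i, θ i ^ 2 := by rw [Finset.mul_sum]
  nlinarith [mul_inv_cancel₀ (ne_of_gt ha)]


/-- graph height function -/
def hfun (m : ℕ) (b : Fin (m+1) → ℝ) (δ2 : ℝ) (j : Fin (m+1))
    (y : EuclideanSpace ℝ (Fin m)) : ℝ :=
  Real.sqrt (max δ2 ((1 - ∑ i, b (j.succAbove i) * y i ^ 2) / b j))

def Fmap (m : ℕ) (b : Fin (m+1) → ℝ) (δ2 : ℝ) (j : Fin (m+1)) (σ : ℝ)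
    (y : EuclideanSpace ℝ (Fin m)) : EuclideanSpace ℝ (Fin (m+1)) :=
  WithLp.toLp 2 (j.insertNth (σ * hfun m b δ2 j y) (fun i => y i) : Fin (m+1) → ℝ)

lemma hfun_lip {m : ℕ} {b : Fin (m+1) → ℝ} {a δ2 : ℝ} (hδ2 : 0 < δ2)
    (hb1 : ∀ i, 1 ≤ b i) (hba : ∀ i, b i ≤ a) (j : Fin (m+1))
    {y y' : EuclideanSpace ℝ (Fin m)} (hy : ‖y‖ ≤ 1) (hy' : ‖y'‖ ≤ 1) :
    |hfun m b δ2 j y - hfun m b δ2 j y'| ≤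
      a * m / Real.sqrt δ2 * dist y y' := by
  have ha : (1:ℝ) ≤ a := le_trans (hb1 j) (hba j)
  set q : EuclideanSpace ℝ (Fin m) → ℝ :=
    fun z => (1 - ∑ i, b (j.succAbove i) * z i ^ 2) / b j with hq
  have hbj : 0 < b j := lt_of_lt_of_le one_pos (hb1 j)
  -- step 1 : |q y - q y'| ≤ 2 a m * dist y y'
  have hstep1 : |q y - q y'| ≤ 2 * a * m * dist y y' := by
    have e : ∑ i, b (j.succAbove i) * (y' i ^ 2 - y i ^ 2) =
        (∑ i, b (j.succAbove i) * y' i ^ 2) - ∑ i, b (j.succAbove i) * y i ^ 2 := by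
      rw [← Finset.sum_sub_distrib]
      exact Finset.sum_congr rfl fun i _ => by ring
    have : q y - q y' = (∑ i, b (j.succAbove i) * (y' i ^ 2 - y i ^ 2)) / b j := by
      rw [hq, div_sub_div_same, e]
      ring_nf
    rw [this, abs_div, abs_of_pos hbj]
    have h1 : |∑ i, b (j.succAbove i) * (y' i ^ 2 - y i ^ 2)| ≤
        ∑ i, b (j.succAbove i) * |y' i ^ 2 - y i ^ 2| := by
      refine le_trans (Finset.abs_sum_le_sum_abs _ _) ?_
      refine Finset.sum_le_sum fun i _ => ?_
      rw [abs_mul, abs_of_pos (lt_of_lt_of_le one_pos (hb1 _))]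
    have h2 : ∀ i : Fin m, b (j.succAbove i) * |y' i ^ 2 - y i ^ 2| ≤
        2 * a * dist y y' := by
      intro i
      have hd1 : |y i - y' i| ≤ dist y y' := by
        have := abs_coord_le (y - y') i
        rw [dist_eq_norm]
        simpa using this
      have hyi : |y i| ≤ 1 := le_trans (abs_coord_le y i) hy
      have hyi' : |y' i| ≤ 1 := le_trans (abs_coord_le y' i) hy'
      have hfac : |y' i ^ 2 - y i ^ 2| = |y' i + y i| * |y' i - y i| := by
        rw [← abs_mul]; ring_nf
      have hsum : |y' i + y i| ≤ 2 := by
        calc |y' i + y i| ≤ |y' i| + |y i| := abs_add_le _ _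
          _ ≤ 2 := by linarith
      have hdd : |y' i - y i| ≤ dist y y' := by rwa [abs_sub_comm]
      have hb' : b (j.succAbove i) ≤ a := hba _
      have hbpos : (0:ℝ) < b (j.succAbove i) := lt_of_lt_of_le one_pos (hb1 _)
      have hprod : |y' i + y i| * |y' i - y i| ≤ 2 * dist y y' :=
        mul_le_mul hsum hdd (abs_nonneg _) (by norm_num)
      calc b (j.succAbove i) * |y' i ^ 2 - y i ^ 2|
          ≤ a * |y' i ^ 2 - y i ^ 2| :=
            mul_le_mul_of_nonneg_right hb' (abs_nonneg _)
        _ = a * (|y' i + y i| * |y' i - y i|) := by rw [hfac]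
        _ ≤ a * (2 * dist y y') := by
            refine mul_le_mul_of_nonneg_left hprod (by linarith)
        _ = 2 * a * dist y y' := by ring
    have h3 : ∑ i : Fin m, b (j.succAbove i) * |y' i ^ 2 - y i ^ 2| ≤
        m * (2 * a * dist y y') := by
      calc ∑ i : Fin m, b (j.succAbove i) * |y' i ^ 2 - y i ^ 2|
          ≤ ∑ _i : Fin m, 2 * a * dist y y' := Finset.sum_le_sum fun i _ => h2 i
        _ = m * (2 * a * dist y y') := by
            rw [Finset.sum_const, Finset.card_univ, Fintype.card_fin, nsmul_eq_mul]
    calc |∑ i, b (j.succAbove i) * (y' i ^ 2 - y i ^ 2)| / b j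
        ≤ |∑ i, b (j.succAbove i) * (y' i ^ 2 - y i ^ 2)| :=
          div_le_self (abs_nonneg _) (hb1 j)
      _ ≤ m * (2 * a * dist y y') := le_trans h1 h3
      _ = 2 * a * m * dist y y' := by ring
  -- step 2 : sqrt-max is Lipschitz
  have hstep2 : |hfun m b δ2 j y - hfun m b δ2 j y'| ≤
      |q y - q y'| / (2 * Real.sqrt δ2) := by
    have hmax : |max δ2 (q y) - max δ2 (q y')| ≤ |q y - q y'| := by
      rw [max_comm δ2 (q y), max_comm δ2 (q y')]
      exact abs_max_sub_max_le_abs _ _ _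
    have hs : ∀ t : ℝ, δ2 ≤ max δ2 t := fun t => le_max_left _ _
    set u := Real.sqrt (max δ2 (q y)) with hu_def
    set v := Real.sqrt (max δ2 (q y')) with hv_def
    have hsq : Real.sqrt δ2 ≤ u := Real.sqrt_le_sqrt (hs _)
    have hsq' : Real.sqrt δ2 ≤ v := Real.sqrt_le_sqrt (hs _)
    have hδpos : 0 < Real.sqrt δ2 := Real.sqrt_pos.mpr hδ2
    have hposuv : 0 < u + v := by linarith
    have hid : (u - v) * (u + v) = max δ2 (q y) - max δ2 (q y') := by
      have h1 : u ^ 2 = max δ2 (q y) := Real.sq_sqrt (le_trans (le_of_lt hδ2) (hs _))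
      have h2 : v ^ 2 = max δ2 (q y') := Real.sq_sqrt (le_trans (le_of_lt hδ2) (hs _))
      nlinarith
    have habs : |u - v| * (u + v) = |max δ2 (q y) - max δ2 (q y')| := by
      conv_lhs => rw [← abs_of_pos hposuv, ← abs_mul, hid]
    have key : |u - v| ≤ |q y - q y'| / (2 * Real.sqrt δ2) := by
      rw [le_div_iff₀ (by positivity)]
      calc |u - v| * (2 * Real.sqrt δ2) ≤ |u - v| * (u + v) := by
            refine mul_le_mul_of_nonneg_left (by linarith) (abs_nonneg _)
        _ = |max δ2 (q y) - max δ2 (q y')| := habs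
        _ ≤ |q y - q y'| := hmax
    exact key
  calc |hfun m b δ2 j y - hfun m b δ2 j y'| ≤ |q y - q y'| / (2 * Real.sqrt δ2) := hstep2
    _ ≤ 2 * a * m * dist y y' / (2 * Real.sqrt δ2) := by gcongr
    _ = a * m / Real.sqrt δ2 * dist y y' := by
        field_simp


lemma Fmap_lipschitz {m : ℕ} {b : Fin (m+1) → ℝ} {a δ2 : ℝ} (hδ2 : 0 < δ2)
    (hb1 : ∀ i, 1 ≤ b i) (hba : ∀ i, b i ≤ a) (j : Fin (m+1)) (σ : ℝ) (hσ : |σ| = 1) :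
    LipschitzOnWith (Real.toNNReal (Real.sqrt ((a * m / Real.sqrt δ2) ^ 2 + 1)))
      (Fmap m b δ2 j σ) (Metric.closedBall (0 : EuclideanSpace ℝ (Fin m)) 1) := by
  rw [lipschitzOnWith_iff_dist_le_mul]
  intro y hy y' hy'
  rw [Metric.mem_closedBall, dist_zero_right] at hy hy'
  set L := a * m / Real.sqrt δ2 with hL
  have hL0 : 0 ≤ L := by
    have ha : (1:ℝ) ≤ a := le_trans (hb1 j) (hba j)
    positivity
  have hlip := hfun_lip hδ2 hb1 hba j hy hy'
  have hd0 : (0:ℝ) ≤ dist y y' := dist_nonneg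
  have hsum : ∑ i, (Fmap m b δ2 j σ y i - Fmap m b δ2 j σ y' i) ^ 2 ≤
      (L ^ 2 + 1) * dist y y' ^ 2 := by
    rw [Fin.sum_univ_succAbove _ j]
    have h1 : Fmap m b δ2 j σ y j - Fmap m b δ2 j σ y' j =
        σ * (hfun m b δ2 j y - hfun m b δ2 j y') := by
      unfold Fmap
      rw [PiLp.toLp_apply, PiLp.toLp_apply, Fin.insertNth_apply_same, Fin.insertNth_apply_same]
      ring
    have h2 : ∀ i : Fin m, Fmap m b δ2 j σ y (j.succAbove i) -
        Fmap m b δ2 j σ y' (j.succAbove i) = y i - y' i := by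
      intro i
      unfold Fmap
      rw [PiLp.toLp_apply, PiLp.toLp_apply, Fin.insertNth_apply_succAbove, Fin.insertNth_apply_succAbove]
    have h3 : (Fmap m b δ2 j σ y j - Fmap m b δ2 j σ y' j) ^ 2 ≤ L ^ 2 * dist y y' ^ 2 := by
      have hσ2 : σ ^ 2 = 1 := by rw [← sq_abs, hσ]; norm_num
      rw [h1, mul_pow, hσ2, one_mul]
      have hdd := mul_self_le_mul_self
        (abs_nonneg (hfun m b δ2 j y - hfun m b δ2 j y')) hlip
      nlinarith [sq_abs (hfun m b δ2 j y - hfun m b δ2 j y')]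
    have h4 : ∑ i : Fin m, (Fmap m b δ2 j σ y (j.succAbove i) -
        Fmap m b δ2 j σ y' (j.succAbove i)) ^ 2 = ∑ i, (y i - y' i) ^ 2 := by
      exact Finset.sum_congr rfl fun i _ => by rw [h2]
    have h5 : ∑ i : Fin m, (y i - y' i) ^ 2 = dist y y' ^ 2 := by
      rw [dist_eq']
      rw [Real.sq_sqrt (Finset.sum_nonneg fun i _ => sq_nonneg _)]
    rw [h4, h5]
    nlinarith [h3]
  have hKc : (Real.toNNReal (Real.sqrt (L ^ 2 + 1)) : ℝ) = Real.sqrt (L ^ 2 + 1) := by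
    rw [Real.coe_toNNReal _ (Real.sqrt_nonneg _)]
  rw [dist_eq']
  calc Real.sqrt (∑ i, (Fmap m b δ2 j σ y i - Fmap m b δ2 j σ y' i) ^ 2)
      ≤ Real.sqrt ((L ^ 2 + 1) * dist y y' ^ 2) := Real.sqrt_le_sqrt hsum
    _ = Real.sqrt (L ^ 2 + 1) * dist y y' := by
        rw [Real.sqrt_mul (by positivity), Real.sqrt_sq hd0]
    _ = (Real.toNNReal (Real.sqrt (L ^ 2 + 1)) : ℝ) * dist y y' := by rw [hKc]

lemma cover {m : ℕ} {b : Fin (m+1) → ℝ} {a : ℝ}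
    (hb1 : ∀ i, 1 ≤ b i) (hba : ∀ i, b i ≤ a) :
    {θ : EuclideanSpace ℝ (Fin (m+1)) | qa (m+1) b θ = 1} ⊆
      ⋃ j : Fin (m+1),
        (Fmap m b (((m:ℝ)+1) * a)⁻¹ j 1 '' Metric.closedBall 0 1 ∪
         Fmap m b (((m:ℝ)+1) * a)⁻¹ j (-1) '' Metric.closedBall 0 1) := by
  intro θ hθ
  simp only [Set.mem_setOf_eq] at hθ
  have ha : (1:ℝ) ≤ a := le_trans (hb1 0) (hba 0)
  set δ2 : ℝ := (((m:ℝ)+1) * a)⁻¹ with hδ2def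
  have hδ2 : 0 < δ2 := by positivity
  -- find a large coordinate
  have hex : ∃ j, δ2 ≤ θ j ^ 2 := by
    by_contra hcon
    push_neg at hcon
    have hlt : qa (m+1) b θ < 1 := by
      have : ∀ j : Fin (m+1), b j * θ j ^ 2 < a * δ2 := by
        intro j
        have h1 : b j * θ j ^ 2 ≤ a * θ j ^ 2 :=
          mul_le_mul_of_nonneg_right (hba j) (sq_nonneg _)
        have h2 : a * θ j ^ 2 < a * δ2 :=
          mul_lt_mul_of_pos_left (hcon j) (by linarith)
        linarith
      calc qa (m+1) b θ < ∑ _j : Fin (m+1), a * δ2 :=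
            Finset.sum_lt_sum_of_nonempty ⟨0, Finset.mem_univ 0⟩ fun j _ => this j
        _ = ((m:ℝ)+1) * (a * δ2) := by
            rw [Finset.sum_const, Finset.card_univ, Fintype.card_fin, nsmul_eq_mul]
            push_cast
            ring
        _ = 1 := by
            rw [hδ2def]
            field_simp
    rw [hθ] at hlt
    exact lt_irrefl _ hlt
  obtain ⟨j, hj⟩ := hex
  set y : EuclideanSpace ℝ (Fin m) := WithLp.toLp 2 (fun i => θ (j.succAbove i) : Fin m → ℝ) with hy
  have hyB : y ∈ Metric.closedBall (0 : EuclideanSpace ℝ (Fin m)) 1 := by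
    rw [Metric.mem_closedBall, dist_zero_right, norm_eq']
    rw [show (1:ℝ) = Real.sqrt 1 by simp]
    refine Real.sqrt_le_sqrt ?_
    calc ∑ i : Fin m, y i ^ 2 = ∑ i : Fin m, θ (j.succAbove i) ^ 2 := rfl
      _ ≤ ∑ i : Fin m, b (j.succAbove i) * θ (j.succAbove i) ^ 2 := by
          refine Finset.sum_le_sum fun i _ => ?_
          nlinarith [hb1 (j.succAbove i), sq_nonneg (θ (j.succAbove i))]
      _ ≤ b j * θ j ^ 2 + ∑ i : Fin m, b (j.succAbove i) * θ (j.succAbove i) ^ 2 := by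
          nlinarith [hb1 j, sq_nonneg (θ j)]
      _ = qa (m+1) b θ := (Fin.sum_univ_succAbove (fun i => b i * θ i ^ 2) j).symm
      _ = 1 := hθ
  have hbj : 0 < b j := lt_of_lt_of_le one_pos (hb1 j)
  have hval : hfun m b δ2 j y = |θ j| := by
    unfold hfun
    have hsum : ∑ i : Fin m, b (j.succAbove i) * y i ^ 2 =
        qa (m+1) b θ - b j * θ j ^ 2 := by
      simp only [qa]
      rw [Fin.sum_univ_succAbove (fun i => b i * θ i ^ 2) j]
      have hyi : ∀ i : Fin m, y i = θ (j.succAbove i) := fun i => rfl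
      simp only [hyi]
      ring
    have : (1 - ∑ i, b (j.succAbove i) * y i ^ 2) / b j = θ j ^ 2 := by
      rw [hsum, hθ]
      field_simp
      ring
    rw [this, max_eq_right hj, Real.sqrt_sq_eq_abs]
  have himg : ∀ σ : ℝ, σ * |θ j| = θ j → θ ∈ Fmap m b δ2 j σ '' Metric.closedBall 0 1 := by
    intro σ hσθ
    refine ⟨y, hyB, ?_⟩
    unfold Fmap
    rw [hval, hσθ]
    have : (fun i => y i : Fin m → ℝ) = fun i => θ (j.succAbove i) := rfl
    rw [this]
    exact congrArg (WithLp.toLp 2) (Fin.insertNth_self_removeNth j θ.ofLp)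
  rcases le_or_gt 0 (θ j) with hpos | hneg
  · refine Set.mem_iUnion.mpr ⟨j, Or.inl (himg 1 ?_)⟩
    rw [one_mul, abs_of_nonneg hpos]
  · refine Set.mem_iUnion.mpr ⟨j, Or.inr (himg (-1) ?_)⟩
    rw [abs_of_neg hneg]
    ring

lemma closedBall_finite (m : ℕ) :
    μH[(m:ℝ)] (Metric.closedBall (0 : EuclideanSpace ℝ (Fin m)) 1) < ⊤ := by
  have h1 : ((Module.finrank ℝ (EuclideanSpace ℝ (Fin m)) : ℕ) : ℝ) = (m:ℝ) := by
    simp [finrank_euclideanSpace_fin]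
  rw [← h1]
  exact (isCompact_closedBall _ _).measure_lt_top

lemma surface_finite {m : ℕ} {b : Fin (m+1) → ℝ} {a : ℝ}
    (hb1 : ∀ i, 1 ≤ b i) (hba : ∀ i, b i ≤ a) :
    μH[((m+1:ℕ):ℝ) - 1] {θ : EuclideanSpace ℝ (Fin (m+1)) | qa (m+1) b θ = 1} < ⊤ := by
  have hd : ((m+1:ℕ):ℝ) - 1 = (m:ℝ) := by push_cast; ring
  rw [hd]
  have ha : (1:ℝ) ≤ a := le_trans (hb1 0) (hba 0)
  set δ2 : ℝ := (((m:ℝ)+1) * a)⁻¹ with hδ2def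
  have hδ2 : 0 < δ2 := by positivity
  set B := Metric.closedBall (0 : EuclideanSpace ℝ (Fin m)) 1 with hB
  have himg : ∀ (j : Fin (m+1)) (σ : ℝ), |σ| = 1 →
      μH[(m:ℝ)] (Fmap m b δ2 j σ '' B) < ⊤ := by
    intro j σ hσ
    refine lt_of_le_of_lt
      ((Fmap_lipschitz hδ2 hb1 hba j σ hσ).hausdorffMeasure_image_le
        (by positivity)) ?_
    refine ENNReal.mul_lt_top ?_ (closedBall_finite m)
    exact ENNReal.rpow_lt_top_of_nonneg (by positivity) ENNReal.coe_ne_top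
  refine lt_of_le_of_lt (measure_mono (cover hb1 hba)) ?_
  refine lt_of_le_of_lt (measure_iUnion_le _) ?_
  rw [tsum_fintype]
  refine ENNReal.sum_lt_top.mpr fun j _ => ?_
  refine lt_of_le_of_lt (measure_union_le _ _) ?_
  exact ENNReal.add_lt_top.mpr ⟨himg j 1 (by norm_num), himg j (-1) (by norm_num)⟩


lemma surface_finite' {n : ℕ} (hn : 1 ≤ n) {b : Fin n → ℝ} {a : ℝ}
    (hb1 : ∀ i, 1 ≤ b i) (hba : ∀ i, b i ≤ a) :
    μH[(n:ℝ) - 1] {θ : EuclideanSpace ℝ (Fin n) | qa n b θ = 1} < ⊤ := by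
  obtain ⟨m, rfl⟩ : ∃ m, n = m + 1 := ⟨n - 1, by omega⟩
  exact surface_finite hb1 hba

lemma Avec_apply {n : ℕ} (b : Fin n → ℝ) (x : EuclideanSpace ℝ (Fin n)) (j : Fin n) :
    Avec n b x j = b j * x j := rfl

/-- The two-coordinate orthogonal involution. -/
def TT (n : ℕ) (i k : Fin n) (p q : ℝ) (θ : EuclideanSpace ℝ (Fin n)) :
    EuclideanSpace ℝ (Fin n) :=
  WithLp.toLp 2 (fun j => if j = i then p * θ i + q * θ k else if j = k then q * θ i - p * θ k else θ j :
    Fin n → ℝ)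

variable {n : ℕ} {i k : Fin n} {p q : ℝ}

lemma TT_apply_i (θ : EuclideanSpace ℝ (Fin n)) : TT n i k p q θ i = p * θ i + q * θ k := by
  simp [TT]

lemma TT_apply_k (hik : i ≠ k) (θ : EuclideanSpace ℝ (Fin n)) :
    TT n i k p q θ k = q * θ i - p * θ k := by
  simp [TT, hik.symm]

lemma TT_apply_other {j : Fin n} (hji : j ≠ i) (hjk : j ≠ k)
    (θ : EuclideanSpace ℝ (Fin n)) : TT n i k p q θ j = θ j := by
  simp [TT, hji, hjk]

lemma sum_split (hik : i ≠ k) (g : Fin n → ℝ) :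
    ∑ j, g j = g i + g k + ∑ j ∈ (Finset.univ.erase i).erase k, g j := by
  rw [← Finset.add_sum_erase _ g (Finset.mem_univ i),
    ← Finset.add_sum_erase _ g (Finset.mem_erase.mpr ⟨hik.symm, Finset.mem_univ k⟩)]
  ring

lemma sumc (hik : i ≠ k) (hpq : p ^ 2 + q ^ 2 = 1) (c : Fin n → ℝ) (hc : c i = c k)
    (θ : EuclideanSpace ℝ (Fin n)) :
    ∑ j, c j * TT n i k p q θ j ^ 2 = ∑ j, c j * θ j ^ 2 := by
  rw [sum_split hik (fun j => c j * TT n i k p q θ j ^ 2),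
    sum_split hik (fun j => c j * θ j ^ 2)]
  have htail : ∑ j ∈ (Finset.univ.erase i).erase k, c j * TT n i k p q θ j ^ 2 =
      ∑ j ∈ (Finset.univ.erase i).erase k, c j * θ j ^ 2 := by
    refine Finset.sum_congr rfl fun j hj => ?_
    rw [Finset.mem_erase, Finset.mem_erase] at hj
    rw [TT_apply_other hj.2.1 hj.1]
  rw [htail, TT_apply_i, TT_apply_k hik, hc]
  linear_combination (θ i ^ 2 + θ k ^ 2) * c k * hpq

lemma TT_invol (hik : i ≠ k) (hpq : p ^ 2 + q ^ 2 = 1) :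
    Function.Involutive (TT n i k p q) := by
  intro θ
  ext j
  by_cases hji : j = i
  · rw [hji, TT_apply_i, TT_apply_i, TT_apply_k hik]
    linear_combination θ i * hpq
  · by_cases hjk : j = k
    · rw [hjk, TT_apply_k hik, TT_apply_i, TT_apply_k hik]
      linear_combination θ k * hpq
    · rw [TT_apply_other hji hjk, TT_apply_other hji hjk]

lemma TT_sub (hik : i ≠ k) (θ θ' : EuclideanSpace ℝ (Fin n)) (j : Fin n) :
    TT n i k p q θ j - TT n i k p q θ' j = TT n i k p q (θ - θ') j := by
  have hsub : ∀ (x y : EuclideanSpace ℝ (Fin n)) (l : Fin n), (x - y) l = x l - y l :=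
    fun _ _ _ => rfl
  by_cases hji : j = i
  · subst hji
    rw [TT_apply_i, TT_apply_i, TT_apply_i, hsub, hsub]
    ring
  · by_cases hjk : j = k
    · subst hjk
      rw [TT_apply_k hik, TT_apply_k hik, TT_apply_k hik, hsub, hsub]
      ring
    · rw [TT_apply_other hji hjk, TT_apply_other hji hjk, TT_apply_other hji hjk, hsub]

lemma TT_dist (hik : i ≠ k) (hpq : p ^ 2 + q ^ 2 = 1)
    (θ θ' : EuclideanSpace ℝ (Fin n)) :
    dist (TT n i k p q θ) (TT n i k p q θ') = dist θ θ' := by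
  rw [dist_eq', dist_eq']
  congr 1
  calc ∑ j, (TT n i k p q θ j - TT n i k p q θ' j) ^ 2
      = ∑ j, TT n i k p q (θ - θ') j ^ 2 := by
        refine Finset.sum_congr rfl fun j _ => by rw [TT_sub hik]
    _ = ∑ j, (θ - θ') j ^ 2 := by
        have := sumc hik hpq (fun _ => 1) rfl (θ - θ')
        simpa using this
    _ = ∑ j, (θ j - θ' j) ^ 2 := rfl

lemma TT_norm (hik : i ≠ k) (hpq : p ^ 2 + q ^ 2 = 1) (θ : EuclideanSpace ℝ (Fin n)) :
    ‖TT n i k p q θ‖ = ‖θ‖ := by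
  rw [norm_eq', norm_eq']
  congr 1
  have := sumc hik hpq (fun _ => 1) rfl θ
  simpa using this

/-- `TT` as an isometry equivalence. -/
def TTiso (n : ℕ) (i k : Fin n) (p q : ℝ) (hik : i ≠ k) (hpq : p ^ 2 + q ^ 2 = 1) :
    EuclideanSpace ℝ (Fin n) ≃ᵢ EuclideanSpace ℝ (Fin n) :=
  ⟨Function.Involutive.toPerm _ (TT_invol hik hpq),
    Isometry.of_dist_eq (TT_dist hik hpq)⟩

lemma TT_qa (hik : i ≠ k) (hpq : p ^ 2 + q ^ 2 = 1) {b : Fin n → ℝ} (hb : b i = b k)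
    (θ : EuclideanSpace ℝ (Fin n)) : qa n b (TT n i k p q θ) = qa n b θ :=
  sumc hik hpq b hb θ

lemma TT_Avec_norm (hik : i ≠ k) (hpq : p ^ 2 + q ^ 2 = 1) {b : Fin n → ℝ}
    (hb : b i = b k) (θ : EuclideanSpace ℝ (Fin n)) :
    ‖Avec n b (TT n i k p q θ)‖ = ‖Avec n b θ‖ := by
  rw [norm_eq', norm_eq']
  congr 1
  calc ∑ j, Avec n b (TT n i k p q θ) j ^ 2
      = ∑ j, (b j) ^ 2 * TT n i k p q θ j ^ 2 := by
        refine Finset.sum_congr rfl fun j _ => ?_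
        rw [Avec_apply, mul_pow]
    _ = ∑ j, (b j) ^ 2 * θ j ^ 2 :=
        sumc hik hpq (fun j => b j ^ 2) (by show b i ^ 2 = b k ^ 2; rw [hb]) θ
    _ = ∑ j, Avec n b θ j ^ 2 := by
        refine Finset.sum_congr rfl fun j _ => ?_
        rw [Avec_apply, mul_pow]

/-- change of variables for `surfInt` along an isometry preserving everything -/
lemma surf_comp {s : ℝ} {b : Fin n → ℝ}
    (T : EuclideanSpace ℝ (Fin n) ≃ᵢ EuclideanSpace ℝ (Fin n))
    (hq : ∀ θ, qa n b (T θ) = qa n b θ)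
    (hnorm : ∀ θ, ‖(T θ : EuclideanSpace ℝ (Fin n))‖ = ‖θ‖)
    (hA : ∀ θ, ‖Avec n b (T θ)‖ = ‖Avec n b θ‖)
    (f : EuclideanSpace ℝ (Fin n) → ℝ) :
    surfInt n s b f = surfInt n s b (fun θ => f (T θ)) := by
  unfold surfInt
  have hmp := T.measurePreserving_hausdorffMeasure ((n : ℝ) - 1)
  have hemb : MeasurableEmbedding T := T.toHomeomorph.toMeasurableEquiv.measurableEmbedding
  have hpre : T ⁻¹' {θ : EuclideanSpace ℝ (Fin n) | qa n b θ = 1} =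
      {θ : EuclideanSpace ℝ (Fin n) | qa n b θ = 1} := by
    ext θ
    simp [Set.mem_preimage, hq]
  rw [← hmp.setIntegral_preimage_emb hemb
    (fun θ => f θ / (‖θ‖ ^ ((n : ℝ) + 2 * s) * ‖Avec n b θ‖)) _, hpre]
  refine setIntegral_congr_fun (measurableSet_S n b) fun θ _ => ?_
  simp only
  rw [hnorm, hA]

lemma surf_TT {s : ℝ} {b : Fin n → ℝ} (hik : i ≠ k) (hpq : p ^ 2 + q ^ 2 = 1)
    (hb : b i = b k) (f : EuclideanSpace ℝ (Fin n) → ℝ) :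
    surfInt n s b f = surfInt n s b (fun θ => f (TT n i k p q θ)) :=
  surf_comp (TTiso n i k p q hik hpq) (TT_qa hik hpq hb) (TT_norm hik hpq)
    (TT_Avec_norm hik hpq hb) f

/-- integrability of bounded measurable integrands on the surface -/
lemma integrable_surf {s a : ℝ} {b : Fin n → ℝ} (ha : 0 < a) (hs : 0 < s)
    (hb1 : ∀ i, 1 ≤ b i) (hba : ∀ i, b i ≤ a)
    (hfin : μH[(n : ℝ) - 1] {θ : EuclideanSpace ℝ (Fin n) | qa n b θ = 1} < ⊤)
    (f : EuclideanSpace ℝ (Fin n) → ℝ) (hf : Measurable f) (C : ℝ)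
    (hC : ∀ θ, qa n b θ = 1 → |f θ| ≤ C) :
    IntegrableOn (fun θ => f θ / (‖θ‖ ^ ((n : ℝ) + 2 * s) * ‖Avec n b θ‖))
      {θ : EuclideanSpace ℝ (Fin n) | qa n b θ = 1} μH[(n : ℝ) - 1] := by
  set S := {θ : EuclideanSpace ℝ (Fin n) | qa n b θ = 1} with hS
  have hAcont : Continuous (Avec n b) := by
    exact (PiLp.continuous_toLp (p := 2) (β := fun _ : Fin n => ℝ)).comp
      (continuous_pi fun i => continuous_const.mul (EuclideanSpace.proj (𝕜 := ℝ) i).continuous)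
  have hmeas : Measurable (fun θ : EuclideanSpace ℝ (Fin n) =>
      f θ / (‖θ‖ ^ ((n : ℝ) + 2 * s) * ‖Avec n b θ‖)) := by
    refine hf.div (Measurable.mul ?_ (continuous_norm.comp hAcont).measurable)
    have hr : (0:ℝ) ≤ (n : ℝ) + 2 * s := by positivity
    exact ((Real.continuous_rpow_const hr).comp continuous_norm).measurable
  set c : ℝ := Real.sqrt a⁻¹ ^ ((n : ℝ) + 2 * s) * Real.sqrt a⁻¹ with hc
  have hsa : 0 < Real.sqrt a⁻¹ := Real.sqrt_pos.mpr (by positivity)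
  have hcpos : 0 < c := by
    rw [hc]
    exact mul_pos (Real.rpow_pos_of_pos hsa _) hsa
  constructor
  · exact hmeas.aestronglyMeasurable
  · refine HasFiniteIntegral.restrict_of_bounded (C := |C| / c) hfin ?_
    refine (ae_restrict_iff' (measurableSet_S n b)).mpr (ae_of_all _ fun θ hθ => ?_)
    have hθ' : qa n b θ = 1 := hθ
    have hn1 : Real.sqrt a⁻¹ ≤ ‖θ‖ := one_div_sqrt_le_norm ha hba hθ'
    have hn2 : ‖θ‖ ≤ ‖Avec n b θ‖ := by
      rw [norm_eq', norm_eq']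
      refine Real.sqrt_le_sqrt (Finset.sum_le_sum fun j _ => ?_)
      rw [Avec_apply, mul_pow]
      have h1 : 1 ≤ b j ^ 2 := by nlinarith [hb1 j]
      nlinarith [sq_nonneg (θ j)]
    have hden : c ≤ ‖θ‖ ^ ((n : ℝ) + 2 * s) * ‖Avec n b θ‖ := by
      rw [hc]
      refine mul_le_mul ?_ (le_trans hn1 hn2) (le_of_lt hsa) ?_
      · exact Real.rpow_le_rpow (le_of_lt hsa) hn1 (by positivity)
      · exact Real.rpow_nonneg (norm_nonneg _) _
    rw [Real.norm_eq_abs, abs_div]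
    rw [abs_of_pos (lt_of_lt_of_le hcpos hden)]
    refine div_le_div₀ (abs_nonneg C) (le_trans (hC θ hθ') (le_abs_self C)) hcpos hden


end S19

set_option maxHeartbeats 2000000 in
open S19 in
/-- mixed moments on `∂E_a`:
`∫ θᵢ²θₖ² dμ = J₂⁽¹⁾/3` for `i ≠ k < n`, and `a ∫ θᵢ²θₙ² dμ = J₁⁽¹⁾ - (n+1)/3 J₂⁽¹⁾`. -/
theorem statement19 (n : ℕ) (s a : ℝ) (hn : 2 ≤ n) (hs : 0 < s) (ha : 1 < a) :
    (∀ i k : Fin n, (i : ℕ) < n - 1 → (k : ℕ) < n - 1 → i ≠ k →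
      surfInt n s (avec n a) (fun θ => θ i ^ 2 * θ k ^ 2) =
        1 / 3 * Jik n s (avec n a) 2 (⟨0, by omega⟩ : Fin n)) ∧
    ∀ i : Fin n, (i : ℕ) < n - 1 →
      a * surfInt n s (avec n a)
          (fun θ => θ i ^ 2 * θ (⟨n - 1, by omega⟩ : Fin n) ^ 2) =
        Jik n s (avec n a) 1 (⟨0, by omega⟩ : Fin n) -
          ((n : ℝ) + 1) / 3 * Jik n s (avec n a) 2 (⟨0, by omega⟩ : Fin n) := by
  have hapos : (0:ℝ) < a := by linarith
  set b : Fin n → ℝ := avec n a with hbdef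
  have hb1 : ∀ i, 1 ≤ b i := by
    intro i
    rw [hbdef]
    unfold avec
    split <;> linarith
  have hba : ∀ i, b i ≤ a := by
    intro i
    rw [hbdef]
    unfold avec
    split <;> linarith
  have hbval : ∀ i : Fin n, (i : ℕ) ≠ n - 1 → b i = 1 := by
    intro i hi
    rw [hbdef]
    unfold avec
    exact if_neg hi
  have hfin := surface_finite' (by omega) hb1 hba
  set II : (EuclideanSpace ℝ (Fin n) → ℝ) → ℝ := surfInt n s b with hII
  -- coordinate measurability
  have hmc : ∀ j : Fin n, Measurable fun θ : EuclideanSpace ℝ (Fin n) => θ j :=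
    fun j => (EuclideanSpace.proj (𝕜 := ℝ) j).continuous.measurable
  -- generic integrability
  have hIntg : ∀ f : EuclideanSpace ℝ (Fin n) → ℝ, Measurable f → ∀ C : ℝ,
      (∀ θ, qa n b θ = 1 → |f θ| ≤ C) →
      IntegrableOn (fun θ => f θ / (‖θ‖ ^ ((n : ℝ) + 2 * s) * ‖Avec n b θ‖))
        {θ : EuclideanSpace ℝ (Fin n) | qa n b θ = 1} μH[(n : ℝ) - 1] :=
    fun f hf C hC => integrable_surf hapos hs hb1 hba hfin f hf C hC
  -- linearity helpers
  have hIadd : ∀ f g : EuclideanSpace ℝ (Fin n) → ℝ,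
      IntegrableOn (fun θ => f θ / (‖θ‖ ^ ((n : ℝ) + 2 * s) * ‖Avec n b θ‖))
        {θ : EuclideanSpace ℝ (Fin n) | qa n b θ = 1} μH[(n : ℝ) - 1] →
      IntegrableOn (fun θ => g θ / (‖θ‖ ^ ((n : ℝ) + 2 * s) * ‖Avec n b θ‖))
        {θ : EuclideanSpace ℝ (Fin n) | qa n b θ = 1} μH[(n : ℝ) - 1] →
      II (fun θ => f θ + g θ) = II f + II g := by
    intro f g hf hg
    rw [hII]
    unfold surfInt
    rw [← integral_add hf hg]
    refine integral_congr_ae (Eventually.of_forall fun θ => ?_)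
    simp only
    rw [add_div]
  have hIsmul : ∀ (c : ℝ) (f : EuclideanSpace ℝ (Fin n) → ℝ),
      II (fun θ => c * f θ) = c * II f := by
    intro c f
    rw [hII]
    unfold surfInt
    rw [← integral_const_mul]
    refine integral_congr_ae (Eventually.of_forall fun θ => ?_)
    simp only
    rw [mul_div_assoc]
  have hIsum : ∀ F : Fin n → EuclideanSpace ℝ (Fin n) → ℝ,
      (∀ j, IntegrableOn (fun θ => F j θ / (‖θ‖ ^ ((n : ℝ) + 2 * s) * ‖Avec n b θ‖))
        {θ : EuclideanSpace ℝ (Fin n) | qa n b θ = 1} μH[(n : ℝ) - 1]) →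
      II (fun θ => ∑ j, F j θ) = ∑ j, II (F j) := by
    intro F hF
    rw [hII]
    unfold surfInt
    rw [← integral_finset_sum Finset.univ (fun j _ => hF j)]
    refine integral_congr_ae (Eventually.of_forall fun θ => ?_)
    simp only
    rw [Finset.sum_div]
  have hIcongS : ∀ f g : EuclideanSpace ℝ (Fin n) → ℝ,
      (∀ θ, qa n b θ = 1 → f θ = g θ) → II f = II g := by
    intro f g h
    rw [hII]
    unfold surfInt
    exact setIntegral_congr_fun (measurableSet_S n b) fun θ hθ => by rw [h θ hθ]
  have hIext : ∀ f g : EuclideanSpace ℝ (Fin n) → ℝ, (∀ θ, f θ = g θ) → II f = II g :=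
    fun f g h => congrArg II (funext h)
  -- key rotation/swap lemma
  have hkey : ∀ i k : Fin n, i ≠ k → b i = b k →
      II (fun θ => θ i ^ 2 * θ k ^ 2) = 1 / 3 * II (fun θ => θ i ^ 4) ∧
      II (fun θ => θ i ^ 4) = II (fun θ => θ k ^ 4) ∧
      II (fun θ => θ i ^ 2) = II (fun θ => θ k ^ 2) := by
    intro i k hik hbik
    have hswap4 : II (fun θ => θ i ^ 4) = II (fun θ => θ k ^ 4) := by
      rw [hII]
      rw [surf_TT (p := 0) (q := 1) hik (by norm_num) hbik (fun θ => θ i ^ 4)]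
      refine congrArg _ (funext fun θ => ?_)
      rw [TT_apply_i]
      ring
    have hswap2 : II (fun θ => θ i ^ 2) = II (fun θ => θ k ^ 2) := by
      rw [hII]
      rw [surf_TT (p := 0) (q := 1) hik (by norm_num) hbik (fun θ => θ i ^ 2)]
      refine congrArg _ (funext fun θ => ?_)
      rw [TT_apply_i]
      ring
    set c : ℝ := (Real.sqrt 2)⁻¹ with hcdef
    have hc2 : c ^ 2 = 1 / 2 := by
      rw [hcdef, inv_pow, Real.sq_sqrt (by norm_num : (0:ℝ) ≤ 2)]
      norm_num
    have hc4 : c ^ 4 = 1 / 4 := by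
      rw [show c ^ 4 = (c ^ 2) ^ 2 by ring, hc2]
      norm_num
    have hpq : c ^ 2 + c ^ 2 = 1 := by rw [hc2]; norm_num
    have h1 : II (fun θ => θ i ^ 4) = II (fun θ => (c * θ i + c * θ k) ^ 4) := by
      rw [hII, surf_TT hik hpq hbik (fun θ => θ i ^ 4)]
      refine congrArg _ (funext fun θ => ?_)
      rw [TT_apply_i]
    have h2 : II (fun θ => θ k ^ 4) = II (fun θ => (c * θ i - c * θ k) ^ 4) := by
      rw [hII, surf_TT hik hpq hbik (fun θ => θ k ^ 4)]
      refine congrArg _ (funext fun θ => ?_)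
      rw [TT_apply_k hik]
    have hbound2 : ∀ θ : EuclideanSpace ℝ (Fin n), qa n b θ = 1 →
        (c * θ i + c * θ k) ^ 2 ≤ 2 ∧ (c * θ i - c * θ k) ^ 2 ≤ 2 := by
      intro θ hθ
      have hb1' := sq_coord_le_one hb1 hθ i
      have hb2' := sq_coord_le_one hb1 hθ k
      constructor
      · nlinarith [hc2, sq_nonneg (θ i - θ k)]
      · nlinarith [hc2, sq_nonneg (θ i + θ k)]
    have hIg1 := hIntg (fun θ => (c * θ i + c * θ k) ^ 4)
      ((((hmc i).const_mul c).add ((hmc k).const_mul c)).pow_const 4) 4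
      (fun θ hθ => by
        beta_reduce
        have h := (hbound2 θ hθ).1
        rw [abs_of_nonneg (by positivity)]
        nlinarith [sq_nonneg (c * θ i + c * θ k)])
    have hIg2 := hIntg (fun θ => (c * θ i - c * θ k) ^ 4)
      ((((hmc i).const_mul c).sub ((hmc k).const_mul c)).pow_const 4) 4
      (fun θ hθ => by
        beta_reduce
        have h := (hbound2 θ hθ).2
        rw [abs_of_nonneg (by positivity)]
        nlinarith [sq_nonneg (c * θ i - c * θ k)])
    have hIi4 := hIntg (fun θ => (1:ℝ)/2 * θ i ^ 4) (((hmc i).pow_const 4).const_mul _) 4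
      (fun θ hθ => by
        beta_reduce
        have hb1' := sq_coord_le_one hb1 hθ i
        rw [abs_of_nonneg (by positivity)]
        nlinarith [sq_nonneg (θ i)])
    have hIk4 := hIntg (fun θ => (1:ℝ)/2 * θ k ^ 4) (((hmc k).pow_const 4).const_mul _) 4
      (fun θ hθ => by
        beta_reduce
        have hb1' := sq_coord_le_one hb1 hθ k
        rw [abs_of_nonneg (by positivity)]
        nlinarith [sq_nonneg (θ k)])
    have hImix := hIntg (fun θ => (3:ℝ) * (θ i ^ 2 * θ k ^ 2))
      ((((hmc i).pow_const 2).mul ((hmc k).pow_const 2)).const_mul _) 4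
      (fun θ hθ => by
        beta_reduce
        have hb1' := sq_coord_le_one hb1 hθ i
        have hb2' := sq_coord_le_one hb1 hθ k
        rw [abs_of_nonneg (by positivity)]
        nlinarith [sq_nonneg (θ i), sq_nonneg (θ k)])
    have hImix4 : IntegrableOn (fun θ => ((3:ℝ) * (θ i ^ 2 * θ k ^ 2) + 1/2 * θ k ^ 4) /
        (‖θ‖ ^ ((n : ℝ) + 2 * s) * ‖Avec n b θ‖))
        {θ : EuclideanSpace ℝ (Fin n) | qa n b θ = 1} μH[(n : ℝ) - 1] := by
      refine (hImix.add hIk4).congr (Eventually.of_forall fun θ => ?_)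
      simp only [Pi.add_apply]
      rw [add_div]
    have hAB : II (fun θ => θ i ^ 4) + II (fun θ => θ k ^ 4) =
        1/2 * II (fun θ => θ i ^ 4) +
          (3 * II (fun θ => θ i ^ 2 * θ k ^ 2) + 1/2 * II (fun θ => θ k ^ 4)) := by
      calc II (fun θ => θ i ^ 4) + II (fun θ => θ k ^ 4)
          = II (fun θ => (c * θ i + c * θ k) ^ 4) +
              II (fun θ => (c * θ i - c * θ k) ^ 4) := by rw [← h1, ← h2]
        _ = II (fun θ => (c * θ i + c * θ k) ^ 4 + (c * θ i - c * θ k) ^ 4) :=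
            (hIadd _ _ hIg1 hIg2).symm
        _ = II (fun θ => 1/2 * θ i ^ 4 + (3 * (θ i ^ 2 * θ k ^ 2) + 1/2 * θ k ^ 4)) := by
            refine hIext _ _ fun θ => ?_
            linear_combination (2 * θ i ^ 4 + 12 * θ i ^ 2 * θ k ^ 2 + 2 * θ k ^ 4) * hc4
        _ = II (fun θ => 1/2 * θ i ^ 4) +
              II (fun θ => 3 * (θ i ^ 2 * θ k ^ 2) + 1/2 * θ k ^ 4) := hIadd _ _ hIi4 hImix4
        _ = 1/2 * II (fun θ => θ i ^ 4) +
              (3 * II (fun θ => θ i ^ 2 * θ k ^ 2) + 1/2 * II (fun θ => θ k ^ 4)) := by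
            rw [hIadd _ _ hImix hIk4, hIsmul, hIsmul, hIsmul]
    exact ⟨by linarith, hswap4, hswap2⟩
  -- named indices
  set Z : Fin n := ⟨0, by omega⟩ with hZdef
  set N : Fin n := ⟨n - 1, by omega⟩ with hNdef
  have hbZ : b Z = 1 := hbval Z (by show (0:ℕ) ≠ n - 1; omega)
  have hbN : b N = a := by
    rw [hbdef]
    unfold avec
    exact if_pos rfl
  have hJ2 : Jik n s b 2 Z = II (fun θ => θ Z ^ 4) := by
    unfold Jik
    rw [hbZ, one_pow, one_mul, ← hII]
  have hJ1 : Jik n s b 1 Z = II (fun θ => θ Z ^ 2) := by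
    unfold Jik
    rw [hbZ, one_pow, one_mul, ← hII]
  -- decomposition for the second part
  have hdecomp : ∀ i : Fin n, (i : ℕ) < n - 1 →
      a * II (fun θ => θ i ^ 2 * θ N ^ 2) =
        II (fun θ => θ i ^ 2) - ((n : ℝ) + 1) / 3 * II (fun θ => θ i ^ 4) := by
    intro i hi
    have hvali : (i : ℕ) ≠ n - 1 := by omega
    have hiN : i ≠ N := fun h => hvali (by rw [h])
    have hbi : b i = 1 := hbval i hvali
    have hFint : ∀ j : Fin n, IntegrableOn
        (fun θ => b j * (θ j ^ 2 * θ i ^ 2) / (‖θ‖ ^ ((n : ℝ) + 2 * s) * ‖Avec n b θ‖))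
        {θ : EuclideanSpace ℝ (Fin n) | qa n b θ = 1} μH[(n : ℝ) - 1] := by
      intro j
      refine hIntg _ ((((hmc j).pow_const 2).mul ((hmc i).pow_const 2)).const_mul _) (a + 3)
        fun θ hθ => ?_
      beta_reduce
      have hb1' := sq_coord_le_one hb1 hθ j
      have hb2' := sq_coord_le_one hb1 hθ i
      have hbj0 : (0:ℝ) ≤ b j := le_trans zero_le_one (hb1 j)
      rw [abs_mul, abs_of_nonneg hbj0, abs_of_nonneg (by positivity)]
      have h1 : θ j ^ 2 * θ i ^ 2 ≤ 1 := by nlinarith [sq_nonneg (θ j), sq_nonneg (θ i)]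
      nlinarith [hba j, sq_nonneg (θ j), sq_nonneg (θ i),
        mul_le_mul_of_nonneg_left h1 hbj0]
    have hstart : II (fun θ => θ i ^ 2) = ∑ j, II (fun θ => b j * (θ j ^ 2 * θ i ^ 2)) := by
      have hpoint : ∀ θ : EuclideanSpace ℝ (Fin n), qa n b θ = 1 →
          θ i ^ 2 = ∑ j, b j * (θ j ^ 2 * θ i ^ 2) := by
        intro θ hθ
        have h1 : ∑ j, b j * (θ j ^ 2 * θ i ^ 2) = (∑ j, b j * θ j ^ 2) * θ i ^ 2 := by
          rw [Finset.sum_mul]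
          exact Finset.sum_congr rfl fun j _ => by ring
        have h2 : ∑ j, b j * θ j ^ 2 = 1 := hθ
        rw [h1, h2, one_mul]
      rw [hIcongS _ _ hpoint]
      exact hIsum (fun j θ => b j * (θ j ^ 2 * θ i ^ 2)) hFint
    have hsplit := sum_split hiN (fun j => II (fun θ => b j * (θ j ^ 2 * θ i ^ 2)))
    have hti : II (fun θ => b i * (θ i ^ 2 * θ i ^ 2)) = II (fun θ => θ i ^ 4) := by
      refine hIext _ _ fun θ => ?_
      rw [hbi]
      ring
    have htN : II (fun θ => b N * (θ N ^ 2 * θ i ^ 2)) =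
        a * II (fun θ => θ i ^ 2 * θ N ^ 2) := by
      rw [show (fun θ : EuclideanSpace ℝ (Fin n) => b N * (θ N ^ 2 * θ i ^ 2)) =
        fun θ => a * (θ i ^ 2 * θ N ^ 2) from funext fun θ => by rw [hbN]; ring]
      exact hIsmul a _

    have htail : ∑ j ∈ (Finset.univ.erase i).erase N,
        II (fun θ => b j * (θ j ^ 2 * θ i ^ 2)) =
        ((n : ℝ) - 2) * (1/3 * II (fun θ => θ i ^ 4)) := by
      have hterm : ∀ j ∈ (Finset.univ.erase i).erase N,
          II (fun θ => b j * (θ j ^ 2 * θ i ^ 2)) = 1/3 * II (fun θ => θ i ^ 4) := by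
        intro j hj
        rw [Finset.mem_erase, Finset.mem_erase] at hj
        have hjN : j ≠ N := hj.1
        have hji : j ≠ i := hj.2.1
        have hvalj : (j : ℕ) ≠ n - 1 := fun h => hjN (Fin.ext (by rw [h]))
        have hbj : b j = 1 := hbval j hvalj
        have hk := hkey j i hji (by rw [hbj, hbi])
        calc II (fun θ => b j * (θ j ^ 2 * θ i ^ 2))
            = II (fun θ => θ j ^ 2 * θ i ^ 2) := by
              refine hIext _ _ fun θ => ?_
              rw [hbj, one_mul]
          _ = 1/3 * II (fun θ => θ j ^ 4) := hk.1
          _ = 1/3 * II (fun θ => θ i ^ 4) := by rw [hk.2.1]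
      rw [Finset.sum_congr rfl hterm, Finset.sum_const, nsmul_eq_mul]
      have hcard : (((Finset.univ : Finset (Fin n)).erase i).erase N).card = n - 2 := by
        rw [Finset.card_erase_of_mem
          (Finset.mem_erase.mpr ⟨Ne.symm hiN, Finset.mem_univ N⟩),
          Finset.card_erase_of_mem (Finset.mem_univ i), Finset.card_univ, Fintype.card_fin]
        omega
      rw [hcard]
      have : ((n - 2 : ℕ) : ℝ) = (n : ℝ) - 2 := by
        rw [Nat.cast_sub (by omega)]
        norm_num
      rw [this]
    rw [hstart, hsplit, hti, htN, htail] 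
    ring
  constructor
  · intro i k hi hk hik
    show II (fun θ => θ i ^ 2 * θ k ^ 2) = 1 / 3 * Jik n s b 2 Z
    have hbi : b i = 1 := hbval i (by omega)
    have hbk : b k = 1 := hbval k (by omega)
    have hk' := hkey i k hik (by rw [hbi, hbk])
    rw [hJ2, hk'.1]
    by_cases hiZ : i = Z
    · rw [hiZ]
    · rw [(hkey i Z hiZ (by rw [hbi, hbZ])).2.1]
  · intro i hi
    show a * II (fun θ => θ i ^ 2 * θ N ^ 2) =
      Jik n s b 1 Z - ((n : ℝ) + 1) / 3 * Jik n s b 2 Z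
    rw [hJ1, hJ2, hdecomp i hi]
    by_cases hiZ : i = Z
    · rw [hiZ]
    · have hbi : b i = 1 := hbval i (by omega)
      have hk := hkey i Z hiZ (by rw [hbi, hbZ])
      rw [hk.2.1, hk.2.2]
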